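/- Let k be even and let f_1, ..., f_k : {0,1}^n → {0,1} satisfy f_i ⇒ f_{i+1} for all i. Then f_1 ⊕ f_2 ⊕ ... ⊕ f_k equals the function ¬f_1 ∧ (f_2 ∨ ¬f_3) ∧ (f_4 ∨ ¬f_5) ∧ ... ∧ (f_{k-2} ∨ ¬f_{k-1}) ∧ f_k. -/
import Mathlib


def xorFold (l : List Bool) : Bool := l.foldr Bool.xor false

lemma xorFold_cons (a : Bool) (l : List Bool) : xorFold (a :: l) = xor a (xorFold l) := rfl

lemma xorFold_threshold (N : ℕ) : ∀ t : ℕ,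
    xorFold (List.ofFn (fun i : Fin N => decide (t ≤ (i : ℕ)))) = decide (Odd (N - t)) := by
  induction N with
  | zero => intro t; simp [xorFold]
  | succ N ih =>
    intro t
    rw [List.ofFn_succ, xorFold_cons]
    have h2 : (fun i : Fin N => decide (t ≤ ((i.succ : Fin (N+1)) : ℕ)))
        = fun i : Fin N => decide (t - 1 ≤ (i : ℕ)) := by
      funext i
      rw [decide_eq_decide]
      simp only [Fin.val_succ]
      omega
    rw [h2, ih (t - 1)]
    rcases t with _ | s
    · simp only [Nat.le_zero, decide_eq_true_eq, Nat.zero_sub, Nat.sub_zero]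
      simp only [Fin.val_zero, Nat.le_refl, decide_true, Bool.true_xor]
      rw [← decide_not, decide_eq_decide]
      rw [Nat.odd_add_one]
    · have : decide (s + 1 ≤ ((0 : Fin (N+1)) : ℕ)) = false := by simp
      rw [this, Bool.false_xor, decide_eq_decide]
      have : N - (s + 1 - 1) = N + 1 - (s + 1) := by omega
      rw [this]

/-- CNF form of an XOR of functions with the implication property (k = 2m even). -/
theorem xor_eq_cnf (n m : ℕ) (hm : 0 < m) (fs : Fin (2 * m) → (Fin n → Bool) → Bool)
    (himp : ∀ i j : Fin (2 * m), (j : ℕ) = (i : ℕ) + 1 →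
      ∀ x, fs i x = true → fs j x = true)
    (x : Fin n → Bool) :
    xorFold (List.ofFn fun i => fs i x) = true ↔
      (fs ⟨0, by omega⟩ x = false ∧
       (∀ j : Fin (m - 1), fs ⟨2 * (j : ℕ) + 1, by have := j.isLt; omega⟩ x = true ∨
          fs ⟨2 * (j : ℕ) + 2, by have := j.isLt; omega⟩ x = false) ∧
       fs ⟨2 * m - 1, by omega⟩ x = true) := by
  classical
  set g : ℕ → Bool := fun i => if h : i < 2 * m then fs ⟨i, h⟩ x else true with hg
  have hex : ∃ i, g i = true := ⟨2 * m, by simp [hg]⟩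
  set t := Nat.find hex with htdef
  have ht_le : t ≤ 2 * m := Nat.find_le (by simp [hg])
  have hgt : g t = true := Nat.find_spec hex
  have hmin : ∀ i, i < t → g i = false := by
    intro i hi
    have := Nat.find_min hex hi
    simpa using this
  have hmono : ∀ i, g i = true → g (i + 1) = true := by
    intro i hi
    by_cases h1 : i + 1 < 2 * m
    · have h0 : i < 2 * m := by omega
      simp only [hg, dif_pos h1]
      simp only [hg, dif_pos h0] at hi
      exact himp ⟨i, h0⟩ ⟨i + 1, h1⟩ rfl x hi
    · simp only [hg]
      rw [dif_neg h1]
  have hmono' : ∀ i j, i ≤ j → g i = true → g j = true := by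
    intro i j hij hgi
    induction hij with
    | refl => exact hgi
    | step h ih => exact hmono _ ih
  have hchar : ∀ (i : ℕ) (h : i < 2 * m), fs ⟨i, h⟩ x = decide (t ≤ i) := by
    intro i h
    by_cases hti : t ≤ i
    · have := hmono' t i hti hgt
      simp only [hg, dif_pos h] at this
      simp [this, hti]
    · have := hmin i (by omega)
      simp only [hg, dif_pos h] at this
      simp [this, hti]
  have hfun : (fun i : Fin (2 * m) => fs i x) = fun i : Fin (2 * m) => decide (t ≤ (i : ℕ)) := by
    funext i
    have := hchar i.val i.isLt
    simpa using this
  rw [hfun, xorFold_threshold]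
  simp only [hchar, decide_eq_true_eq, decide_eq_false_iff_not]
  rw [Nat.odd_iff]
  constructor
  · intro h
    refine ⟨by omega, fun j => ?_, by omega⟩
    have := j.isLt
    omega
  · rintro ⟨h1, h2, h3⟩
    by_contra h
    have hj : t / 2 - 1 < m - 1 := by omega
    have := h2 ⟨t / 2 - 1, hj⟩
    simp only [decide_eq_true_eq, decide_eq_false_iff_not] at this
    rcases this with h4 | h4 <;> omega
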